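/- The k-dimensional subspace robust Wasserstein distance S_k satisfies the triangle inequality: for all μ₀, μ₁, μ₂ ∈ P₂(ℝ^d), S_k(μ₀,μ₂) ≤ S_k(μ₀,μ₁) + S_k(μ₁,μ₂). -/

import Mathlib

noncomputable section
open MeasureTheory Matrix

open scoped ComplexOrder in
/-- The positive semidefinite square root of a positive semidefinite matrix
(removed from Mathlib; restored with its old definition). -/
def Matrix.PosSemidef.sqrt {n 𝕜 : Type*} [Fintype n] [DecidableEq n] [RCLike 𝕜]
    {A : Matrix n n 𝕜} (hA : A.PosSemidef) : Matrix n n 𝕜 :=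
  hA.1.eigenvectorUnitary.1 * diagonal ((↑) ∘ (√·) ∘ hA.1.eigenvalues) *
    (star hA.1.eigenvectorUnitary : Matrix n n 𝕜)

lemma Matrix.PosSemidef.posSemidef_sqrt {n : Type*} [Fintype n] [DecidableEq n]
    {A : Matrix n n ℝ} (hA : A.PosSemidef) : hA.sqrt.PosSemidef := by
  unfold Matrix.PosSemidef.sqrt
  have := (Matrix.PosSemidef.diagonal (R := ℝ) (n := n)
    (d := ((↑) ∘ (√·) ∘ hA.1.eigenvalues)) (fun i => by simp [Real.sqrt_nonneg])).mul_mul_conjTranspose_same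
    (hA.1.eigenvectorUnitary : Matrix n n ℝ)
  simpa [conjTranspose_eq_transpose_of_trivial, star_eq_conjTranspose, Function.comp_def] using this

lemma Matrix.PosSemidef.sqrt_mul_self {n : Type*} [Fintype n] [DecidableEq n]
    {A : Matrix n n ℝ} (hA : A.PosSemidef) : hA.sqrt * hA.sqrt = A := by
  let C : Matrix n n ℝ := hA.1.eigenvectorUnitary
  let E := diagonal ((↑) ∘ Real.sqrt ∘ hA.1.eigenvalues : n → ℝ)
  suffices C * (E * (star C * C) * E) * star C = A by
    show C * E * star C * (C * E * star C) = A
    simpa only [← mul_assoc] using this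
  have : star C * C = 1 := by simp [C]
  rw [this, mul_one]
  have : E * E = diagonal ((↑) ∘ hA.1.eigenvalues) := by
    rw [diagonal_mul_diagonal]
    congr! with v
    simp [← pow_two, Real.sq_sqrt (hA.eigenvalues_nonneg v)]
  rw [mul_assoc C, this]
  conv_rhs => rw [hA.1.spectral_theorem]
  simp [C, mul_assoc]
  rfl

abbrev Ed (d : ℕ) := EuclideanSpace ℝ (Fin d)

def couplings {d : ℕ} (μ ν : Measure (Ed d)) : Set (Measure (Ed d × Ed d)) :=
  {π | IsProbabilityMeasure π ∧ π.map Prod.fst = μ ∧ π.map Prod.snd = ν}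

def transportCost {d : ℕ} (π : Measure (Ed d × Ed d)) : ℝ :=
  ∫ p, ‖p.1 - p.2‖ ^ 2 ∂π

/-- Squared 2-Wasserstein distance. -/
def W2sq {d : ℕ} (μ ν : Measure (Ed d)) : ℝ :=
  sInf (transportCost '' couplings μ ν)

/-- Subspace robust Wasserstein distance, max-over-`Ω` formulation:
`S_k(μ,ν) = sup { W₂((Ω^{1/2})_#μ, (Ω^{1/2})_#ν) : 0 ⪯ Ω ⪯ I, tr Ω = k }`. -/
def SRW {d : ℕ} (k : ℕ) (μ ν : Measure (Ed d)) : ℝ :=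
  sSup {x | ∃ Ω : Matrix (Fin d) (Fin d) ℝ, ∃ hΩ : Ω.PosSemidef,
      (1 - Ω).PosSemidef ∧ Ω.trace = (k : ℝ) ∧
      x = Real.sqrt (W2sq (μ.map (Matrix.toEuclideanLin hΩ.sqrt))
                          (ν.map (Matrix.toEuclideanLin hΩ.sqrt)))}

section Aux
open ProbabilityTheory ENNReal

/-! ### Gluing of couplings -/

variable {E : Type*} [MeasurableSpace E] [StandardBorelSpace E] [Nonempty E]

omit [StandardBorelSpace E] [Nonempty E] in
lemma map_compProd_prod_left {α : Type*} [MeasurableSpace α] (μ : Measure α) [SFinite μ]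
    (κ η : Kernel α E) [IsMarkovKernel κ] [IsMarkovKernel η] :
    (μ ⊗ₘ (κ ×ₖ η)).map (fun p => (p.1, p.2.1)) = μ ⊗ₘ κ := by
  ext s hs
  rw [Measure.map_apply (by fun_prop) hs,
    Measure.compProd_apply (hs.preimage (by fun_prop)), Measure.compProd_apply hs]
  congr 1
  ext a
  have h1 : (Prod.mk a ⁻¹' ((fun p : α × E × E => (p.1, p.2.1)) ⁻¹' s))
      = Prod.fst ⁻¹' (Prod.mk a ⁻¹' s) := rfl
  rw [h1, Kernel.prod_apply, ← Measure.fst_apply (measurable_prodMk_left hs),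
    Measure.fst_prod]

omit [StandardBorelSpace E] [Nonempty E] in
lemma map_compProd_prod_right {α : Type*} [MeasurableSpace α] (μ : Measure α) [SFinite μ]
    (κ η : Kernel α E) [IsMarkovKernel κ] [IsMarkovKernel η] :
    (μ ⊗ₘ (κ ×ₖ η)).map (fun p => (p.1, p.2.2)) = μ ⊗ₘ η := by
  ext s hs
  rw [Measure.map_apply (by fun_prop) hs,
    Measure.compProd_apply (hs.preimage (by fun_prop)), Measure.compProd_apply hs]
  congr 1
  ext a
  have h1 : (Prod.mk a ⁻¹' ((fun p : α × E × E => (p.1, p.2.2)) ⁻¹' s))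
      = Prod.snd ⁻¹' (Prod.mk a ⁻¹' s) := rfl
  rw [h1, Kernel.prod_apply, ← Measure.snd_apply (measurable_prodMk_left hs),
    Measure.snd_prod]

/-- Gluing lemma: two probability measures on `E × E` with equal first marginals can be
realized as the `(1,2)`- and `(1,3)`-marginals of a single measure on `E × E × E`. -/
lemma glue (ρ₁ ρ₂ : Measure (E × E)) [IsProbabilityMeasure ρ₁] [IsProbabilityMeasure ρ₂]
    (h : ρ₁.fst = ρ₂.fst) :
    ∃ τ : Measure (E × E × E), IsProbabilityMeasure τ ∧
      τ.map (fun p => (p.1, p.2.1)) = ρ₁ ∧ τ.map (fun p => (p.1, p.2.2)) = ρ₂ := by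
  refine ⟨ρ₁.fst ⊗ₘ (ρ₁.condKernel ×ₖ ρ₂.condKernel), inferInstance, ?_, ?_⟩
  · rw [map_compProd_prod_left, ρ₁.disintegrate]
  · rw [map_compProd_prod_right, h, ρ₂.disintegrate]

/-! ### An L² Minkowski inequality -/

variable {α F : Type*} [MeasurableSpace α] [NormedAddCommGroup F]

omit [StandardBorelSpace E] [Nonempty E] in
lemma sqrt_int_sq (μ : Measure α) (G : α → F) (hG : MemLp G 2 μ) :
    Real.sqrt (∫ x, ‖G x‖ ^ 2 ∂μ) = (eLpNorm G 2 μ).toReal := by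
  rw [hG.eLpNorm_eq_integral_rpow_norm (by norm_num) (by norm_num)]
  simp only [ENNReal.toReal_ofNat]
  rw [ENNReal.toReal_ofReal (by positivity)]
  rw [Real.sqrt_eq_rpow]
  norm_num

omit [StandardBorelSpace E] [Nonempty E] in
lemma my_minkowski (μ : Measure α) (G₁ G₂ : α → F) (hG₁ : MemLp G₁ 2 μ) (hG₂ : MemLp G₂ 2 μ) :
    Real.sqrt (∫ x, ‖G₁ x + G₂ x‖ ^ 2 ∂μ) ≤
      Real.sqrt (∫ x, ‖G₁ x‖ ^ 2 ∂μ) + Real.sqrt (∫ x, ‖G₂ x‖ ^ 2 ∂μ) := by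
  rw [sqrt_int_sq μ G₁ hG₁, sqrt_int_sq μ G₂ hG₂,
    sqrt_int_sq μ (fun x => G₁ x + G₂ x) (hG₁.add hG₂)]
  have h := eLpNorm_add_le hG₁.aestronglyMeasurable hG₂.aestronglyMeasurable
    (by norm_num : (1:ℝ≥0∞) ≤ 2)
  have h2 : eLpNorm G₁ 2 μ ≠ ⊤ := hG₁.eLpNorm_ne_top
  have h3 : eLpNorm G₂ 2 μ ≠ ⊤ := hG₂.eLpNorm_ne_top
  calc (eLpNorm (fun x => G₁ x + G₂ x) 2 μ).toReal
      ≤ (eLpNorm G₁ 2 μ + eLpNorm G₂ 2 μ).toReal := by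
        apply ENNReal.toReal_mono (by finiteness) h
    _ = _ := ENNReal.toReal_add h2 h3

end Aux

/-! ### Basic facts about couplings and `W2sq` -/

variable {d : ℕ}

lemma fst_moment_integrable {μ ν : Measure (Ed d)} {π : Measure (Ed d × Ed d)}
    (hπ : π ∈ couplings μ ν) (hμ : Integrable (fun x => ‖x‖ ^ 2) μ) :
    Integrable (fun p : Ed d × Ed d => ‖p.1‖ ^ 2) π := by
  have := hπ.2.1
  rw [← this] at hμ
  exact (integrable_map_measure (by exact (continuous_norm.pow 2).aestronglyMeasurable)
    (by fun_prop)).mp hμ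

lemma snd_moment_integrable {μ ν : Measure (Ed d)} {π : Measure (Ed d × Ed d)}
    (hπ : π ∈ couplings μ ν) (hν : Integrable (fun x => ‖x‖ ^ 2) ν) :
    Integrable (fun p : Ed d × Ed d => ‖p.2‖ ^ 2) π := by
  have := hπ.2.2
  rw [← this] at hν
  exact (integrable_map_measure (by exact (continuous_norm.pow 2).aestronglyMeasurable)
    (by fun_prop)).mp hν

lemma cost_integrable {μ ν : Measure (Ed d)} {π : Measure (Ed d × Ed d)}
    (hπ : π ∈ couplings μ ν) (hμ : Integrable (fun x => ‖x‖ ^ 2) μ)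
    (hν : Integrable (fun x => ‖x‖ ^ 2) ν) :
    Integrable (fun p : Ed d × Ed d => ‖p.1 - p.2‖ ^ 2) π := by
  refine Integrable.mono' (((fst_moment_integrable hπ hμ).add
    (snd_moment_integrable hπ hν)).const_mul 2)
    (by exact ((continuous_fst.sub continuous_snd).norm.pow 2).aestronglyMeasurable) ?_
  refine Filter.Eventually.of_forall fun p => ?_
  rw [Real.norm_eq_abs, abs_of_nonneg (by positivity)]
  have h := norm_sub_le p.1 p.2
  simp only [Pi.add_apply]
  nlinarith [pow_le_pow_left₀ (norm_nonneg (p.1 - p.2)) h 2, sq_nonneg (‖p.1‖ - ‖p.2‖)]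

lemma cost_memℒp {μ ν : Measure (Ed d)} {π : Measure (Ed d × Ed d)}
    (hπ : π ∈ couplings μ ν) (hμ : Integrable (fun x => ‖x‖ ^ 2) μ)
    (hν : Integrable (fun x => ‖x‖ ^ 2) ν) :
    MemLp (fun p : Ed d × Ed d => p.1 - p.2) 2 π := by
  rw [memLp_two_iff_integrable_sq_norm (by fun_prop)]
  exact cost_integrable hπ hμ hν

lemma transportCost_nonneg (π : Measure (Ed d × Ed d)) : 0 ≤ transportCost π :=
  integral_nonneg fun p => by positivity

lemma W2sq_le {μ ν : Measure (Ed d)} {π : Measure (Ed d × Ed d)}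
    (hπ : π ∈ couplings μ ν) : W2sq μ ν ≤ transportCost π :=
  csInf_le ⟨0, fun _ ⟨π', _, hx⟩ => hx ▸ transportCost_nonneg π'⟩ ⟨π, hπ, rfl⟩

lemma prod_mem_couplings (μ ν : Measure (Ed d)) [IsProbabilityMeasure μ]
    [IsProbabilityMeasure ν] : μ.prod ν ∈ couplings μ ν :=
  ⟨inferInstance, Measure.fst_prod, Measure.snd_prod⟩

lemma W2sq_nonneg (μ ν : Measure (Ed d)) [IsProbabilityMeasure μ] [IsProbabilityMeasure ν] :
    0 ≤ W2sq μ ν :=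
  le_csInf ⟨_, ⟨_, prod_mem_couplings μ ν, rfl⟩⟩ fun _ ⟨π', _, hx⟩ =>
    hx ▸ transportCost_nonneg π'

lemma sqrt_add_le' {a b : ℝ} (ha : 0 ≤ a) (hb : 0 ≤ b) :
    Real.sqrt (a + b) ≤ Real.sqrt a + Real.sqrt b := by
  rw [show Real.sqrt a + Real.sqrt b = Real.sqrt ((Real.sqrt a + Real.sqrt b) ^ 2) from
    (Real.sqrt_sq (by positivity)).symm]
  apply Real.sqrt_le_sqrt
  nlinarith [Real.sq_sqrt ha, Real.sq_sqrt hb, Real.sqrt_nonneg a, Real.sqrt_nonneg b]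

/-! ### The triangle inequality for `W₂` -/

lemma sqrt_W2sq_triangle (μ₀ μ₁ μ₂ : Measure (Ed d))
    [IsProbabilityMeasure μ₀] [IsProbabilityMeasure μ₁] [IsProbabilityMeasure μ₂]
    (h₀ : Integrable (fun x => ‖x‖ ^ 2) μ₀) (h₁ : Integrable (fun x => ‖x‖ ^ 2) μ₁)
    (h₂ : Integrable (fun x => ‖x‖ ^ 2) μ₂) :
    Real.sqrt (W2sq μ₀ μ₂) ≤ Real.sqrt (W2sq μ₀ μ₁) + Real.sqrt (W2sq μ₁ μ₂) := by
  have key : ∀ π₀₁ ∈ couplings μ₀ μ₁, ∀ π₁₂ ∈ couplings μ₁ μ₂,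
      Real.sqrt (W2sq μ₀ μ₂) ≤
        Real.sqrt (transportCost π₀₁) + Real.sqrt (transportCost π₁₂) := by
    intro π₀₁ hπ₀₁ π₁₂ hπ₁₂
    haveI := hπ₀₁.1; haveI := hπ₁₂.1
    set ρ₁ := π₀₁.map Prod.swap with hρ₁
    haveI : IsProbabilityMeasure ρ₁ := Measure.isProbabilityMeasure_map measurable_swap.aemeasurable
    have hfst : ρ₁.fst = π₁₂.fst := by
      rw [Measure.fst, hρ₁, Measure.map_map measurable_fst measurable_swap]
      show π₀₁.map Prod.snd = π₁₂.fst
      rw [hπ₀₁.2.2, Measure.fst, hπ₁₂.2.1]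
    obtain ⟨τ, hτp, hτ1, hτ2⟩ := glue ρ₁ π₁₂ hfst
    haveI := hτp
    set m : Ed d × Ed d × Ed d → Ed d × Ed d := fun p => (p.2.1, p.2.2) with hm
    have hmm : Measurable m := by fun_prop
    set π := τ.map m with hπdef
    have hπfst : π.map Prod.fst = μ₀ := by
      rw [hπdef, Measure.map_map measurable_fst hmm]
      have : (Prod.fst ∘ m) = (Prod.snd ∘ (fun p : Ed d × Ed d × Ed d => (p.1, p.2.1))) := rfl
      rw [this, ← Measure.map_map measurable_snd (by fun_prop), hτ1]
      show ρ₁.snd = μ₀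
      rw [Measure.snd, hρ₁, Measure.map_map measurable_snd measurable_swap]
      show π₀₁.map Prod.fst = μ₀
      exact hπ₀₁.2.1
    have hπsnd : π.map Prod.snd = μ₂ := by
      rw [hπdef, Measure.map_map measurable_snd hmm]
      have : (Prod.snd ∘ m) = (Prod.snd ∘ (fun p : Ed d × Ed d × Ed d => (p.1, p.2.2))) := rfl
      rw [this, ← Measure.map_map measurable_snd (by fun_prop), hτ2]
      exact hπ₁₂.2.2
    have hπmem : π ∈ couplings μ₀ μ₂ :=
      ⟨Measure.isProbabilityMeasure_map hmm.aemeasurable, hπfst, hπsnd⟩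
    set F : Ed d × Ed d × Ed d → Ed d := fun p => p.2.1 - p.1 with hF
    set G : Ed d × Ed d × Ed d → Ed d := fun p => p.1 - p.2.2 with hG
    have hFmem : MemLp F 2 τ := by
      have h1 : MemLp (fun q : Ed d × Ed d => q.2 - q.1) 2 ρ₁ := by
        rw [hρ₁, memLp_map_measure_iff (g := fun q : Ed d × Ed d => q.2 - q.1)
          (continuous_snd.sub continuous_fst).aestronglyMeasurable
          measurable_swap.aemeasurable]
        exact cost_memℒp hπ₀₁ h₀ h₁
      rw [← hτ1, memLp_map_measure_iff (g := fun q : Ed d × Ed d => q.2 - q.1) (μ := τ)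
        (continuous_snd.sub continuous_fst).aestronglyMeasurable (by fun_prop)] at h1
      exact h1
    have hGmem : MemLp G 2 τ := by
      have h1 : MemLp (fun q : Ed d × Ed d => q.1 - q.2) 2 π₁₂ := cost_memℒp hπ₁₂ h₁ h₂
      rw [← hτ2, memLp_map_measure_iff (g := fun q : Ed d × Ed d => q.1 - q.2) (μ := τ)
        (continuous_fst.sub continuous_snd).aestronglyMeasurable (by fun_prop)] at h1
      exact h1
    have hcost : transportCost π = ∫ p, ‖F p + G p‖ ^ 2 ∂τ := by
      rw [hπdef, transportCost,
        integral_map hmm.aemeasurable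
          (by exact ((continuous_fst.sub continuous_snd).norm.pow 2).aestronglyMeasurable)]
      refine integral_congr_ae (Filter.Eventually.of_forall fun p => ?_)
      show ‖p.2.1 - p.2.2‖ ^ 2 = ‖F p + G p‖ ^ 2
      rw [hF, hG, sub_add_sub_cancel]
    have hcF : ∫ p, ‖F p‖ ^ 2 ∂τ = transportCost π₀₁ := by
      have e1 : ∫ q : Ed d × Ed d, ‖q.2 - q.1‖ ^ 2 ∂ρ₁ = ∫ p, ‖F p‖ ^ 2 ∂τ := by
        rw [← hτ1, integral_map (by fun_prop)
          (by exact ((continuous_snd.sub continuous_fst).norm.pow 2).aestronglyMeasurable)]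
      rw [← e1, hρ₁, integral_map measurable_swap.aemeasurable
        (by exact ((continuous_snd.sub continuous_fst).norm.pow 2).aestronglyMeasurable)]
      rfl
    have hcG : ∫ p, ‖G p‖ ^ 2 ∂τ = transportCost π₁₂ := by
      have e1 : ∫ q : Ed d × Ed d, ‖q.1 - q.2‖ ^ 2 ∂π₁₂ = ∫ p, ‖G p‖ ^ 2 ∂τ := by
        rw [← hτ2, integral_map (by fun_prop)
          (by exact ((continuous_fst.sub continuous_snd).norm.pow 2).aestronglyMeasurable)]
      rw [← e1]; rfl
    calc Real.sqrt (W2sq μ₀ μ₂) ≤ Real.sqrt (transportCost π) :=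
          Real.sqrt_le_sqrt (W2sq_le hπmem)
      _ = Real.sqrt (∫ p, ‖F p + G p‖ ^ 2 ∂τ) := by rw [hcost]
      _ ≤ Real.sqrt (∫ p, ‖F p‖ ^ 2 ∂τ) + Real.sqrt (∫ p, ‖G p‖ ^ 2 ∂τ) :=
          my_minkowski τ F G hFmem hGmem
      _ = _ := by rw [hcF, hcG]
  have main : ∀ ε : ℝ, 0 < ε →
      Real.sqrt (W2sq μ₀ μ₂) ≤ Real.sqrt (W2sq μ₀ μ₁) + Real.sqrt (W2sq μ₁ μ₂) + ε := by
    intro ε hε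
    have hε2 : (0:ℝ) < (ε / 2) ^ 2 := by positivity
    obtain ⟨c₁, hc₁, hlt₁⟩ := Real.lt_sInf_add_pos
      (⟨_, ⟨_, prod_mem_couplings μ₀ μ₁, rfl⟩⟩ : (transportCost '' couplings μ₀ μ₁).Nonempty) hε2
    obtain ⟨c₂, hc₂, hlt₂⟩ := Real.lt_sInf_add_pos
      (⟨_, ⟨_, prod_mem_couplings μ₁ μ₂, rfl⟩⟩ : (transportCost '' couplings μ₁ μ₂).Nonempty) hε2
    obtain ⟨π₀₁, hmem₁, rfl⟩ := hc₁
    obtain ⟨π₁₂, hmem₂, rfl⟩ := hc₂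
    have b₁ : Real.sqrt (transportCost π₀₁) ≤ Real.sqrt (W2sq μ₀ μ₁) + ε / 2 := by
      calc Real.sqrt (transportCost π₀₁) ≤ Real.sqrt (W2sq μ₀ μ₁ + (ε / 2) ^ 2) :=
            Real.sqrt_le_sqrt hlt₁.le
        _ ≤ Real.sqrt (W2sq μ₀ μ₁) + Real.sqrt ((ε / 2) ^ 2) :=
            sqrt_add_le' (W2sq_nonneg μ₀ μ₁) hε2.le
        _ = Real.sqrt (W2sq μ₀ μ₁) + ε / 2 := by rw [Real.sqrt_sq (by positivity)]
    have b₂ : Real.sqrt (transportCost π₁₂) ≤ Real.sqrt (W2sq μ₁ μ₂) + ε / 2 := by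
      calc Real.sqrt (transportCost π₁₂) ≤ Real.sqrt (W2sq μ₁ μ₂ + (ε / 2) ^ 2) :=
            Real.sqrt_le_sqrt hlt₂.le
        _ ≤ Real.sqrt (W2sq μ₁ μ₂) + Real.sqrt ((ε / 2) ^ 2) :=
            sqrt_add_le' (W2sq_nonneg μ₁ μ₂) hε2.le
        _ = Real.sqrt (W2sq μ₁ μ₂) + ε / 2 := by rw [Real.sqrt_sq (by positivity)]
    have := key π₀₁ hmem₁ π₁₂ hmem₂
    linarith
  by_contra hcon
  push_neg at hcon
  have := main ((Real.sqrt (W2sq μ₀ μ₂) - (Real.sqrt (W2sq μ₀ μ₁) + Real.sqrt (W2sq μ₁ μ₂))) / 2)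
    (by linarith)
  linarith

/-! ### Matrix facts -/

lemma norm_sq_eq_dot (z : Ed d) : ‖z‖ ^ 2 = (fun i => z i) ⬝ᵥ (fun i => z i) := by
  rw [← real_inner_self_eq_norm_sq, PiLp.inner_apply]
  simp [dotProduct, sq]

lemma contraction {Ω : Matrix (Fin d) (Fin d) ℝ} (hΩ : Ω.PosSemidef)
    (h1 : (1 - Ω).PosSemidef) (x : Ed d) : ‖toEuclideanLin hΩ.sqrt x‖ ≤ ‖x‖ := by
  set B := hΩ.sqrt with hBdef
  have hB : B.PosSemidef := hΩ.posSemidef_sqrt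
  have hsq : ‖toEuclideanLin B x‖ ^ 2 ≤ ‖x‖ ^ 2 := by
    set v : Fin d → ℝ := fun i => x i with hv
    have e1 : ‖toEuclideanLin B x‖ ^ 2 = (B *ᵥ v) ⬝ᵥ (B *ᵥ v) := by
      rw [norm_sq_eq_dot]
      rfl
    have e2 : (B *ᵥ v) ⬝ᵥ (B *ᵥ v) = (Ω *ᵥ v) ⬝ᵥ v := by
      rw [dotProduct_mulVec, ← mulVec_transpose, mulVec_mulVec]
      have hBt : Bᵀ = B := by
        have h := hB.isHermitian
        rwa [Matrix.IsHermitian, conjTranspose_eq_transpose_of_trivial] at h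
      rw [hBt, hΩ.sqrt_mul_self]
    have e3 : ‖x‖ ^ 2 = v ⬝ᵥ v := norm_sq_eq_dot x
    have h4 := h1.dotProduct_mulVec_nonneg v
    have hstar : star v = v := by funext i; simp
    rw [hstar, sub_mulVec, one_mulVec, dotProduct_sub] at h4
    rw [e1, e2, e3, dotProduct_comm]
    linarith
  calc ‖toEuclideanLin B x‖ = Real.sqrt (‖toEuclideanLin B x‖ ^ 2) :=
        (Real.sqrt_sq (norm_nonneg _)).symm
    _ ≤ Real.sqrt (‖x‖ ^ 2) := Real.sqrt_le_sqrt hsq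
    _ = ‖x‖ := Real.sqrt_sq (norm_nonneg _)

lemma toEuclideanLin_continuous (M : Matrix (Fin d) (Fin d) ℝ) :
    Continuous (toEuclideanLin M : Ed d →ₗ[ℝ] Ed d) :=
  LinearMap.continuous_of_finiteDimensional _

/-! ### Moment bounds for pushforwards -/

lemma moment_map_integrable {μ : Measure (Ed d)} (hμ : Integrable (fun x => ‖x‖ ^ 2) μ)
    {A : Ed d → Ed d} (hA : Continuous A) (hc : ∀ x, ‖A x‖ ≤ ‖x‖) :
    Integrable (fun x => ‖x‖ ^ 2) (μ.map A) := by
  rw [integrable_map_measure (by exact (continuous_norm.pow 2).aestronglyMeasurable)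
    hA.measurable.aemeasurable]
  refine hμ.mono' (by exact ((continuous_norm.comp hA).pow 2).aestronglyMeasurable) ?_
  refine Filter.Eventually.of_forall fun x => ?_
  show ‖‖A x‖ ^ 2‖ ≤ ‖x‖ ^ 2
  rw [Real.norm_eq_abs, abs_of_nonneg (by positivity : (0:ℝ) ≤ ‖A x‖ ^ 2)]
  exact pow_le_pow_left₀ (norm_nonneg (A x)) (hc x) 2

lemma moment_map_le {μ : Measure (Ed d)} (hμ : Integrable (fun x => ‖x‖ ^ 2) μ)
    {A : Ed d → Ed d} (hA : Continuous A) (hc : ∀ x, ‖A x‖ ≤ ‖x‖) :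
    ∫ x, ‖x‖ ^ 2 ∂(μ.map A) ≤ ∫ x, ‖x‖ ^ 2 ∂μ := by
  rw [integral_map hA.measurable.aemeasurable
    (by exact (continuous_norm.pow 2).aestronglyMeasurable)]
  refine integral_mono ?_ hμ fun x => ?_
  · have := moment_map_integrable hμ hA hc
    rwa [integrable_map_measure (by exact (continuous_norm.pow 2).aestronglyMeasurable)
      hA.measurable.aemeasurable] at this
  · exact pow_le_pow_left₀ (norm_nonneg (A x)) (hc x) 2

lemma W2sq_le_moments (μ ν : Measure (Ed d)) [IsProbabilityMeasure μ] [IsProbabilityMeasure ν]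
    (hμ : Integrable (fun x => ‖x‖ ^ 2) μ) (hν : Integrable (fun x => ‖x‖ ^ 2) ν) :
    W2sq μ ν ≤ 2 * ∫ x, ‖x‖ ^ 2 ∂μ + 2 * ∫ x, ‖x‖ ^ 2 ∂ν := by
  have hπ := prod_mem_couplings μ ν
  refine le_trans (W2sq_le hπ) ?_
  have i1 := fst_moment_integrable hπ hμ
  have i2 := snd_moment_integrable hπ hν
  have step1 : transportCost (μ.prod ν) ≤
      ∫ p : Ed d × Ed d, (2 * ‖p.1‖ ^ 2 + 2 * ‖p.2‖ ^ 2) ∂(μ.prod ν) := by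
    refine integral_mono (cost_integrable hπ hμ hν) ((i1.const_mul 2).add (i2.const_mul 2))
      fun p => ?_
    have h := norm_sub_le p.1 p.2
    nlinarith [pow_le_pow_left₀ (norm_nonneg (p.1 - p.2)) h 2, sq_nonneg (‖p.1‖ - ‖p.2‖)]
  have e1 : ∫ p : Ed d × Ed d, ‖p.1‖ ^ 2 ∂(μ.prod ν) = ∫ x, ‖x‖ ^ 2 ∂μ := by
    conv_rhs => rw [← hπ.2.1]
    rw [integral_map (by fun_prop) (by exact (continuous_norm.pow 2).aestronglyMeasurable)]
  have e2 : ∫ p : Ed d × Ed d, ‖p.2‖ ^ 2 ∂(μ.prod ν) = ∫ x, ‖x‖ ^ 2 ∂ν := by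
    conv_rhs => rw [← hπ.2.2]
    rw [integral_map (by fun_prop) (by exact (continuous_norm.pow 2).aestronglyMeasurable)]
  rw [integral_add (i1.const_mul 2) (i2.const_mul 2), integral_const_mul, integral_const_mul,
    e1, e2] at step1
  exact step1

/-! ### The SRW sets -/

def SRWset (k : ℕ) (μ ν : Measure (Ed d)) : Set ℝ :=
  {x | ∃ Ω : Matrix (Fin d) (Fin d) ℝ, ∃ hΩ : Ω.PosSemidef,
      (1 - Ω).PosSemidef ∧ Ω.trace = (k : ℝ) ∧
      x = Real.sqrt (W2sq (μ.map (Matrix.toEuclideanLin hΩ.sqrt))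
                          (ν.map (Matrix.toEuclideanLin hΩ.sqrt)))}

lemma SRW_eq_sSup (k : ℕ) (μ ν : Measure (Ed d)) : SRW k μ ν = sSup (SRWset k μ ν) := rfl

lemma SRWset_nonempty (k : ℕ) (hkd : k ≤ d) (μ ν : Measure (Ed d)) :
    (SRWset k μ ν).Nonempty := by
  have hd : 0 < d ∨ k = 0 := by
    rcases Nat.eq_zero_or_pos d with h | h
    · right; omega
    · left; exact h
  set c : ℝ := (k : ℝ) / d with hc
  have hc0 : 0 ≤ c := by positivity
  have hc1 : c ≤ 1 := by
    rcases hd with h | h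
    · rw [hc, div_le_one (by exact_mod_cast h)]
      exact_mod_cast hkd
    · simp [hc, h]
  have hΩ : (Matrix.diagonal (fun _ : Fin d => c)).PosSemidef :=
    Matrix.PosSemidef.diagonal (by intro i; simpa using hc0)
  refine ⟨_, Matrix.diagonal (fun _ : Fin d => c), hΩ, ?_, ?_, rfl⟩
  · have : (1 : Matrix (Fin d) (Fin d) ℝ) - Matrix.diagonal (fun _ => c)
        = Matrix.diagonal (fun _ => 1 - c) := by
      rw [← Matrix.diagonal_one, Matrix.diagonal_sub]
    rw [this]
    exact Matrix.PosSemidef.diagonal (by intro i; simp only [Pi.zero_apply]; linarith)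
  · rw [Matrix.trace_diagonal]
    rcases hd with h | h
    · have hd0 : (d : ℝ) ≠ 0 := by exact_mod_cast h.ne'
      rw [hc, Finset.sum_const, Finset.card_univ, Fintype.card_fin, nsmul_eq_mul]
      field_simp
    · subst h
      simp [hc]

lemma SRWset_bddAbove (k : ℕ) (μ ν : Measure (Ed d)) [IsProbabilityMeasure μ]
    [IsProbabilityMeasure ν] (hμ : Integrable (fun x => ‖x‖ ^ 2) μ)
    (hν : Integrable (fun x => ‖x‖ ^ 2) ν) :
    BddAbove (SRWset k μ ν) := by
  refine ⟨Real.sqrt (2 * ∫ x, ‖x‖ ^ 2 ∂μ + 2 * ∫ x, ‖x‖ ^ 2 ∂ν), ?_⟩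
  rintro x ⟨Ω, hΩ, h1, htr, rfl⟩
  have hA := toEuclideanLin_continuous (d := d) hΩ.sqrt
  have hc := contraction hΩ h1
  haveI : IsProbabilityMeasure (μ.map (toEuclideanLin hΩ.sqrt)) :=
    Measure.isProbabilityMeasure_map hA.measurable.aemeasurable
  haveI : IsProbabilityMeasure (ν.map (toEuclideanLin hΩ.sqrt)) :=
    Measure.isProbabilityMeasure_map hA.measurable.aemeasurable
  apply Real.sqrt_le_sqrt
  calc W2sq (μ.map (toEuclideanLin hΩ.sqrt)) (ν.map (toEuclideanLin hΩ.sqrt))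
      ≤ 2 * ∫ x, ‖x‖ ^ 2 ∂(μ.map (toEuclideanLin hΩ.sqrt))
        + 2 * ∫ x, ‖x‖ ^ 2 ∂(ν.map (toEuclideanLin hΩ.sqrt)) :=
        W2sq_le_moments _ _ (moment_map_integrable hμ hA hc) (moment_map_integrable hν hA hc)
    _ ≤ 2 * ∫ x, ‖x‖ ^ 2 ∂μ + 2 * ∫ x, ‖x‖ ^ 2 ∂ν := by
        have := moment_map_le hμ hA hc
        have := moment_map_le hν hA hc
        linarith

/-- The subspace robust Wasserstein distance satisfies the triangle inequality. -/
theorem SRW_triangle {d : ℕ} (k : ℕ) (hk : 1 ≤ k) (hkd : k ≤ d)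
    (μ₀ μ₁ μ₂ : Measure (Ed d))
    [IsProbabilityMeasure μ₀] [IsProbabilityMeasure μ₁] [IsProbabilityMeasure μ₂]
    (h₀ : Integrable (fun x => ‖x‖ ^ 2) μ₀) (h₁ : Integrable (fun x => ‖x‖ ^ 2) μ₁)
    (h₂ : Integrable (fun x => ‖x‖ ^ 2) μ₂) :
    SRW k μ₀ μ₂ ≤ SRW k μ₀ μ₁ + SRW k μ₁ μ₂ := by
  rw [SRW_eq_sSup, SRW_eq_sSup, SRW_eq_sSup]
  refine csSup_le (SRWset_nonempty k hkd μ₀ μ₂) ?_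
  rintro x ⟨Ω, hΩ, h1, htr, rfl⟩
  have hA := toEuclideanLin_continuous (d := d) hΩ.sqrt
  have hc := contraction hΩ h1
  haveI : IsProbabilityMeasure (μ₀.map (toEuclideanLin hΩ.sqrt)) :=
    Measure.isProbabilityMeasure_map hA.measurable.aemeasurable
  haveI : IsProbabilityMeasure (μ₁.map (toEuclideanLin hΩ.sqrt)) :=
    Measure.isProbabilityMeasure_map hA.measurable.aemeasurable
  haveI : IsProbabilityMeasure (μ₂.map (toEuclideanLin hΩ.sqrt)) :=
    Measure.isProbabilityMeasure_map hA.measurable.aemeasurable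
  have tri := sqrt_W2sq_triangle (μ₀.map (toEuclideanLin hΩ.sqrt))
    (μ₁.map (toEuclideanLin hΩ.sqrt)) (μ₂.map (toEuclideanLin hΩ.sqrt))
    (moment_map_integrable h₀ hA hc) (moment_map_integrable h₁ hA hc)
    (moment_map_integrable h₂ hA hc)
  have m₁ : Real.sqrt (W2sq (μ₀.map (toEuclideanLin hΩ.sqrt))
      (μ₁.map (toEuclideanLin hΩ.sqrt))) ≤ sSup (SRWset k μ₀ μ₁) :=
    le_csSup (SRWset_bddAbove k μ₀ μ₁ h₀ h₁) ⟨Ω, hΩ, h1, htr, rfl⟩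
  have m₂ : Real.sqrt (W2sq (μ₁.map (toEuclideanLin hΩ.sqrt))
      (μ₂.map (toEuclideanLin hΩ.sqrt))) ≤ sSup (SRWset k μ₁ μ₂) :=
    le_csSup (SRWset_bddAbove k μ₁ μ₂ h₁ h₂) ⟨Ω, hΩ, h1, htr, rfl⟩
  linarith
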